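/- (Lemma 2.) The sequence k_n(x)/n converges to 1/2 in η-measure: for every ε > 0, η({x ∈ X : |k_n(x)/n − 1/2| ≥ ε}) → 0 as n → ∞. -/

import Mathlib

open MeasureTheory Filter
open scoped ENNReal

/-- The Euler path space: a point is an infinite edge path in the Euler graph,
`x n : Fin (n+2)` being the label of the edge chosen from level `n` to level `n+1`. -/
abbrev EulerPath : Type := ∀ n : ℕ, Fin (n + 2)

/-- Vertex labels: `kv x n` is the `k` with the path `x` passing through vertex `(n,k)`.
A label `(x n : ℕ) ≤ kv x n` is a left turn (edge to `(n+1, kv x n)`), a larger label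
is a right turn (edge to `(n+1, kv x n + 1)`). -/
def kv (x : EulerPath) : ℕ → ℕ
  | 0 => 0
  | n + 1 => if (x n : ℕ) ≤ kv x n then kv x n else kv x n + 1

/-- The symmetric measure: the product over `n` of the uniform probability measures on
`Fin (n+2)`, characterized as the probability measure giving each cylinder of length `n`
the measure `∏_{i<n} 1/(i+2)`. -/
def IsSymmetricMeasure (η : Measure EulerPath) : Prop :=
  IsProbabilityMeasure η ∧
    ∀ (n : ℕ) (c : EulerPath),
      η {x | ∀ i < n, x i = c i} = ∏ i ∈ Finset.range n, ((i : ℝ≥0∞) + 2)⁻¹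

/-! ### Auxiliary finite model -/

abbrev Fn (n : ℕ) := ∀ i : Fin n, Fin ((i : ℕ) + 2)

def extendP (n : ℕ) (c : Fn n) : EulerPath :=
  fun i => if h : i < n then c ⟨i, h⟩ else 0

lemma kv_congr {x y : EulerPath} (n : ℕ) (h : ∀ i < n, x i = y i) : kv x n = kv y n := by
  induction n with
  | zero => rfl
  | succ n ih =>
    have h1 : kv x n = kv y n := ih fun i hi => h i (Nat.lt_succ_of_lt hi)
    have h2 : x n = y n := h n (Nat.lt_succ_self n)
    simp [kv, h1, h2]

lemma kv_le (x : EulerPath) (n : ℕ) : kv x n ≤ n := by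
  induction n with
  | zero => exact le_refl 0
  | succ n ih => simp only [kv]; split <;> omega

def kvF {n : ℕ} (c : Fn n) : ℕ := kv (extendP n c) n

lemma kv_eq_kvF (x : EulerPath) (n : ℕ) : kv x n = kvF (fun i : Fin n => x i) := by
  apply kv_congr
  intro i hi
  simp [extendP, hi]

lemma kvF_le {n : ℕ} (c : Fn n) : kvF c ≤ n := kv_le _ n

def snoc (n : ℕ) (c : Fn n) (a : Fin (n + 2)) : Fn (n + 1) :=
  fun j => if h : (j : ℕ) < n then c ⟨j, h⟩
    else ⟨(a : ℕ), by have := a.isLt; have := j.isLt; omega⟩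

lemma kvF_snoc (n : ℕ) (c : Fn n) (a : Fin (n + 2)) :
    kvF (snoc n c a) = if (a : ℕ) ≤ kvF c then kvF c else kvF c + 1 := by
  have hagree : kv (extendP (n+1) (snoc n c a)) n = kvF c := by
    apply kv_congr
    intro i hi
    simp [extendP, snoc, hi, Nat.lt_succ_of_lt hi]
  have hlast : (extendP (n+1) (snoc n c a) n : ℕ) = (a : ℕ) := by
    simp [extendP, snoc]
  show kv (extendP (n+1) (snoc n c a)) (n+1) = _
  simp only [kv, hagree, hlast]

def snocEquiv (n : ℕ) : Fn n × Fin (n + 2) ≃ Fn (n + 1) where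
  toFun p := snoc n p.1 p.2
  invFun c := (fun i => ⟨(c i.castSucc : ℕ), (c i.castSucc).isLt⟩,
    ⟨(c (Fin.last n) : ℕ), (c (Fin.last n)).isLt⟩)
  left_inv p := by
    obtain ⟨c, a⟩ := p
    refine Prod.ext ?_ ?_
    · funext i
      have h : ((i.castSucc : Fin (n+1)) : ℕ) < n := i.isLt
      apply Fin.ext
      simp [snoc, h]
    · apply Fin.ext
      have h : ¬ (((Fin.last n) : Fin (n+1)) : ℕ) < n := by simp
      simp [snoc, h]
  right_inv c := by
    funext j
    by_cases h : (j : ℕ) < n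
    · apply Fin.ext
      simp only [snoc, dif_pos h]
      congr 1
    · have hj : j = Fin.last n := Fin.ext (by have := j.isLt; simp [Fin.last]; omega)
      subst hj
      apply Fin.ext
      simp [snoc, h]

lemma sum_fin_ite (n k A B : ℕ) (hk : k ≤ n) :
    ∑ a : Fin (n + 2), (if (a : ℕ) ≤ k then A else B) = (k + 1) * A + (n + 1 - k) * B := by
  rw [Fin.sum_univ_eq_sum_range (fun a => if a ≤ k then A else B) (n + 2)]
  rw [Finset.range_eq_Ico, ← Finset.sum_Ico_consecutive _ (Nat.zero_le (k+1)) (by omega : k + 1 ≤ n + 2)]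
  rw [← Finset.range_eq_Ico]
  have h1 : ∑ a ∈ Finset.range (k+1), (if a ≤ k then A else B) = (k+1) * A := by
    rw [Finset.sum_congr rfl (fun a ha => if_pos (by simp at ha; omega))]
    simp [mul_comm]
  have h2 : ∑ a ∈ Finset.Ico (k+1) (n+2), (if a ≤ k then A else B) = (n+1-k) * B := by
    rw [Finset.sum_congr rfl (fun a ha => if_neg (by simp at ha; omega))]
    simp [mul_comm]
  rw [h1, h2]

lemma card_Fn (n : ℕ) : Fintype.card (Fn n) = (n+1).factorial := by
  rw [Fintype.card_pi]
  induction n with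
  | zero => simp
  | succ n ih =>
    rw [Fin.prod_univ_castSucc]
    simp only [Fintype.card_fin, Fin.coe_castSucc, Fin.val_last] at *
    rw [ih]
    simp [Nat.factorial_succ]
    ring

def S1 (n : ℕ) : ℕ := ∑ c : Fn n, kvF c
def S2 (n : ℕ) : ℕ := ∑ c : Fn n, (kvF c) ^ 2

lemma sum_snoc (n : ℕ) (f : ℕ → ℕ) :
    ∑ c : Fn (n+1), f (kvF c)
      = ∑ c : Fn n, ((kvF c + 1) * f (kvF c) + (n + 1 - kvF c) * f (kvF c + 1)) := by
  rw [← (snocEquiv n).sum_comp (fun c => f (kvF c))]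
  rw [Fintype.sum_prod_type]
  refine Finset.sum_congr rfl fun c _ => ?_
  have : ∀ a : Fin (n+2), f (kvF (snocEquiv n (c, a)))
      = if (a:ℕ) ≤ kvF c then f (kvF c) else f (kvF c + 1) := by
    intro a
    show f (kvF (snoc n c a)) = _
    rw [kvF_snoc]
    split <;> rfl
  rw [Finset.sum_congr rfl fun a _ => this a]
  exact sum_fin_ite n (kvF c) _ _ (kvF_le c)

lemma S1_succ (n : ℕ) : S1 (n + 1) = (n + 1) * (S1 n + Fintype.card (Fn n)) := by
  have := sum_snoc n id
  simp only [id] at this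
  rw [S1, this]
  have : ∀ c : Fn n, (kvF c + 1) * kvF c + (n + 1 - kvF c) * (kvF c + 1)
      = (n+1) * kvF c + (n+1) := by
    intro c
    have h := kvF_le c
    revert h
    generalize kvF c = k
    intro h
    obtain ⟨j, rfl⟩ := Nat.exists_eq_add_of_le h
    have h2 : k + j + 1 - k = j + 1 := by omega
    rw [h2]; ring
  rw [Finset.sum_congr rfl fun c _ => this c, Finset.sum_add_distrib, ← Finset.mul_sum]
  simp [S1, mul_add, Finset.card_univ, Fintype.card_pi]
  ring

lemma S2_succ (n : ℕ) :
    S2 (n + 1) = n * S2 n + (2 * n + 1) * S1 n + (n + 1) * Fintype.card (Fn n) := by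
  have := sum_snoc n (fun k => k ^ 2)
  rw [S2, this]
  have : ∀ c : Fn n, (kvF c + 1) * kvF c ^ 2 + (n + 1 - kvF c) * (kvF c + 1) ^ 2
      = n * kvF c ^ 2 + (2 * n + 1) * kvF c + (n + 1) := by
    intro c
    have h := kvF_le c
    revert h
    generalize kvF c = k
    intro h
    obtain ⟨j, rfl⟩ := Nat.exists_eq_add_of_le h
    have h2 : k + j + 1 - k = j + 1 := by omega
    rw [h2]; ring
  rw [Finset.sum_congr rfl fun c _ => this c]
  rw [Finset.sum_add_distrib, Finset.sum_add_distrib, ← Finset.mul_sum, ← Finset.mul_sum]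
  simp [S1, S2, Finset.card_univ, Fintype.card_pi]
  ring

lemma S1_eq (n : ℕ) : 2 * S1 n = n * (n+1).factorial := by
  induction n with
  | zero =>
    have h0 : S1 0 = 0 := by simp [S1]; rfl
    simp [h0]
  | succ n ih =>
    rw [S1_succ, card_Fn]
    have : 2 * ((n + 1) * (S1 n + (n+1).factorial))
        = (n+1) * (2 * S1 n) + 2 * (n+1) * (n+1).factorial := by ring
    rw [this, ih, Nat.factorial_succ (n+1)]
    ring

lemma S2_eq (n : ℕ) (hn : 1 ≤ n) : 12 * S2 n = (3 * n ^ 2 + n + 2) * (n+1).factorial := by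
  induction n with
  | zero => omega
  | succ n ih =>
    rcases Nat.eq_or_lt_of_le hn with h | h
    · have h0 : n = 0 := by omega
      subst h0
      have h1 : S1 0 = 0 := by simp [S1]; rfl
      have h2 : S2 0 = 0 := by simp [S2]; rfl
      rw [S2_succ, h1, h2, card_Fn]
      simp [Nat.factorial]
    · have hn1 : 1 ≤ n := by omega
      rw [S2_succ, card_Fn]
      have e : 12 * (n * S2 n + (2*n+1) * S1 n + (n+1) * (n+1).factorial)
          = n * (12 * S2 n) + 6 * (2*n+1) * (2 * S1 n) + 12 * (n+1) * (n+1).factorial := by ring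
      rw [e, ih hn1, S1_eq, Nat.factorial_succ (n+1)]
      ring

lemma Vsum (n : ℕ) (hn : 1 ≤ n) :
    ∑ c : Fn n, ((kvF c : ℝ) - n / 2) ^ 2
      = ((n : ℝ) + 2) * (n+1).factorial / 12 := by
  have h1 : 2 * (S1 n : ℝ) = n * (n+1).factorial := by exact_mod_cast congrArg (Nat.cast (R := ℝ)) (S1_eq n)
  have h2 : 12 * (S2 n : ℝ) = (3 * (n:ℝ)^2 + n + 2) * (n+1).factorial := by
    have := congrArg (Nat.cast (R := ℝ)) (S2_eq n hn)
    push_cast at this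
    linarith
  have expand : ∑ c : Fn n, ((kvF c : ℝ) - n/2)^2
      = (S2 n : ℝ) - n * S1 n + (n+1).factorial * ((n:ℝ)^2/4) := by
    have hb : ∀ c : Fn n, ((kvF c:ℝ) - n/2)^2
        = (kvF c:ℝ)^2 - n * kvF c + (n:ℝ)^2/4 := fun c => by ring
    rw [Finset.sum_congr rfl fun c _ => hb c, Finset.sum_add_distrib, Finset.sum_sub_distrib,
      ← Finset.mul_sum, Finset.sum_const, Finset.card_univ, card_Fn, nsmul_eq_mul]
    push_cast [S1, S2]
    ring
  rw [expand]
  linear_combination h2 / 12 - (n:ℝ)/2 * h1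

/-! ### Measure of restriction events -/

def cyl (n : ℕ) (c : Fn n) : Set EulerPath := {x | ∀ i : Fin n, x i = c i}

lemma cyl_eq (n : ℕ) (c : Fn n) : cyl n c = {x | ∀ i < n, x i = extendP n c i} := by
  ext x
  constructor
  · intro hx i hi
    simpa [extendP, hi] using hx ⟨i, hi⟩
  · intro hx i
    have := hx i i.isLt
    simpa [extendP, i.isLt] using this

lemma measurable_cyl (n : ℕ) (c : Fn n) : MeasurableSet (cyl n c) := by
  have : cyl n c = ⋂ i : Fin n, (fun x : EulerPath => x i) ⁻¹' {c i} := by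
    ext x; simp [cyl]
  rw [this]
  exact MeasurableSet.iInter fun i =>
    (measurable_pi_apply (i : ℕ)) (measurableSet_singleton (c i))

lemma measure_restrict_mem (η : Measure EulerPath) (hη : IsSymmetricMeasure η)
    (n : ℕ) (S : Finset (Fn n)) :
    η {x | (fun i : Fin n => x i) ∈ S} =
      (S.card : ℝ≥0∞) * ∏ i ∈ Finset.range n, ((i : ℝ≥0∞) + 2)⁻¹ := by
  have hset : {x : EulerPath | (fun i : Fin n => x i) ∈ S} = ⋃ c ∈ S, cyl n c := by
    ext x
    simp only [Set.mem_setOf_eq, Set.mem_iUnion]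
    constructor
    · intro hx
      exact ⟨fun i => x i, hx, fun i => rfl⟩
    · rintro ⟨c, hc, hx⟩
      have : (fun i : Fin n => x i) = c := funext fun i => hx i
      rwa [this]
  rw [hset, measure_biUnion_finset ?_ fun c _ => measurable_cyl n c]
  · have hc : ∀ c ∈ S, η (cyl n c) = ∏ i ∈ Finset.range n, ((i : ℝ≥0∞) + 2)⁻¹ := by
      intro c _
      rw [cyl_eq]
      exact hη.2 n (extendP n c)
    rw [Finset.sum_congr rfl hc, Finset.sum_const, nsmul_eq_mul]
  · intro c _ d _ hcd
    rw [Function.onFun, Set.disjoint_left]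
    intro x hxc hxd
    exact hcd (funext fun i => (hxc i).symm.trans (hxd i))

lemma prod_range_inv (n : ℕ) :
    ∏ i ∈ Finset.range n, ((i : ℝ≥0∞) + 2)⁻¹ = (((n+1).factorial : ℕ) : ℝ≥0∞)⁻¹ := by
  induction n with
  | zero => simp
  | succ n ih =>
    rw [Finset.prod_range_succ, ih, ← ENNReal.mul_inv]
    · congr 1
      rw [Nat.factorial_succ (n+1)]
      push_cast
      ring
    · left; exact_mod_cast Nat.factorial_ne_zero (n+1)
    · left; exact ENNReal.natCast_ne_top _

/-- **Lemma 2.** `k_n/n → 1/2` in `η`-measure: for every `ε > 0`,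
`η {x : |k_n(x)/n - 1/2| ≥ ε} → 0` as `n → ∞`. -/
theorem euler_kn_over_n_tendsto_half_in_measure
    (η : Measure EulerPath) (hη : IsSymmetricMeasure η) (ε : ℝ) (hε : 0 < ε) :
    Tendsto (fun n => η {x | ε ≤ |(kv x n : ℝ) / (n : ℝ) - 1 / 2|}) atTop
      (nhds 0) := by
  classical
  -- bound sequence
  have hreal : Tendsto (fun n : ℕ => 1/(4*ε^2) * (1/(n:ℝ))) atTop (nhds 0) := by
    have := (tendsto_one_div_atTop_nhds_zero_nat).const_mul (1/(4*ε^2))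
    simpa [one_div] using this
  have hb : Tendsto (fun n : ℕ => ENNReal.ofReal (1/(4*ε^2) * (1/(n:ℝ)))) atTop (nhds 0) := by
    simpa using ENNReal.tendsto_ofReal hreal
  refine tendsto_of_tendsto_of_tendsto_of_le_of_le' tendsto_const_nhds hb
    (Eventually.of_forall fun n => zero_le) ?_
  rw [eventually_atTop]
  refine ⟨1, fun n hn => ?_⟩
  set B : Finset (Fn n) :=
    Finset.univ.filter (fun c : Fn n => ε ≤ |(kvF c : ℝ) / n - 1/2|) with hB
  have hsetB : {x : EulerPath | ε ≤ |(kv x n : ℝ) / (n : ℝ) - 1 / 2|}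
      = {x | (fun i : Fin n => x i) ∈ B} := by
    ext x
    simp only [Set.mem_setOf_eq, hB, Finset.mem_filter, Finset.mem_univ, true_and]
    rw [kv_eq_kvF x n]
  have hn0 : (0:ℝ) < n := by exact_mod_cast hn
  have hFpos : (0:ℝ) < (n+1).factorial := by exact_mod_cast (n+1).factorial_pos
  -- Chebyshev bound on the card of B
  have cheb : (B.card : ℝ) * (ε^2 * n^2) ≤ ((n:ℝ) + 2) * (n+1).factorial / 12 := by
    have hpt : ∀ c ∈ B, ε^2 * (n:ℝ)^2 ≤ ((kvF c : ℝ) - n/2)^2 := by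
      intro c hc
      rw [hB, Finset.mem_filter] at hc
      have h := hc.2
      have h1 : ε * n ≤ |(kvF c : ℝ) - n/2| := by
        have := mul_le_mul_of_nonneg_right h (le_of_lt hn0)
        calc ε * n ≤ |(kvF c : ℝ)/n - 1/2| * n := this
        _ = |((kvF c : ℝ)/n - 1/2) * n| := by
            rw [abs_mul, abs_of_nonneg (le_of_lt hn0)]
        _ = |(kvF c : ℝ) - n/2| := by
            congr 1
            field_simp
      have h2 : (ε * n)^2 ≤ |(kvF c : ℝ) - n/2|^2 :=
        pow_le_pow_left₀ (by positivity) h1 2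
      rw [sq_abs] at h2
      calc ε^2 * (n:ℝ)^2 = (ε * n)^2 := by ring
      _ ≤ _ := h2
    calc (B.card : ℝ) * (ε^2 * n^2) = ∑ _c ∈ B, (ε^2 * (n:ℝ)^2) := by
          rw [Finset.sum_const, nsmul_eq_mul]
    _ ≤ ∑ c ∈ B, ((kvF c : ℝ) - n/2)^2 := Finset.sum_le_sum hpt
    _ ≤ ∑ c : Fn n, ((kvF c : ℝ) - n/2)^2 :=
        Finset.sum_le_sum_of_subset_of_nonneg (Finset.subset_univ B)
          (fun c _ _ => sq_nonneg _)
    _ = ((n:ℝ) + 2) * (n+1).factorial / 12 := Vsum n hn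
  have hcard : (B.card : ℝ) ≤ 1/(4*ε^2) * (1/(n:ℝ)) * (n+1).factorial := by
    have key : (B.card : ℝ) * (4 * ε^2 * n) ≤ (n+1).factorial := by
      have hmul : (B.card : ℝ) * (4 * ε^2 * n) * n ≤ (n+1).factorial * n := by
        have h3 : ((n:ℝ) + 2) * (n+1).factorial / 12 ≤ (n:ℝ) * (n+1).factorial / 4 := by
          have : ((n:ℝ) + 2) ≤ 3 * n := by
            have : (1:ℝ) ≤ n := by exact_mod_cast hn
            linarith
          have := mul_le_mul_of_nonneg_right this (le_of_lt hFpos)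
          linarith
        nlinarith [cheb]
      exact le_of_mul_le_mul_right hmul hn0
    rw [show (1/(4*ε^2) * (1/(n:ℝ)) * (n+1).factorial : ℝ)
        = (n+1).factorial / (4 * ε^2 * n) by field_simp]
    rw [le_div_iff₀ (by positivity)]
    exact key
  -- conclude in ℝ≥0∞
  have hmeas : η {x | ε ≤ |(kv x n : ℝ) / (n : ℝ) - 1 / 2|}
      = (B.card : ℝ≥0∞) * (((n+1).factorial : ℕ) : ℝ≥0∞)⁻¹ := by
    rw [hsetB, measure_restrict_mem η hη n B, prod_range_inv]
  rw [hmeas]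
  have hF0 : (((n+1).factorial : ℕ) : ℝ≥0∞) ≠ 0 := by
    exact_mod_cast Nat.factorial_ne_zero (n+1)
  have hFt : (((n+1).factorial : ℕ) : ℝ≥0∞) ≠ ⊤ := ENNReal.natCast_ne_top _
  have hle : (B.card : ℝ≥0∞) ≤ ENNReal.ofReal (1/(4*ε^2) * (1/(n:ℝ)))
      * (((n+1).factorial : ℕ) : ℝ≥0∞) := by
    rw [← ENNReal.ofReal_natCast B.card, ← ENNReal.ofReal_natCast (n+1).factorial,
      ← ENNReal.ofReal_mul (by positivity)]
    exact ENNReal.ofReal_le_ofReal hcard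
  calc (B.card : ℝ≥0∞) * (((n+1).factorial : ℕ) : ℝ≥0∞)⁻¹
      ≤ ENNReal.ofReal (1/(4*ε^2) * (1/(n:ℝ))) * (((n+1).factorial : ℕ) : ℝ≥0∞)
        * (((n+1).factorial : ℕ) : ℝ≥0∞)⁻¹ := mul_le_mul_left hle _
  _ = ENNReal.ofReal (1/(4*ε^2) * (1/(n:ℝ))) := by
      rw [mul_assoc, ENNReal.mul_inv_cancel hF0 hFt, mul_one]
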